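/- For every integer n ≥ 1, the sum of area(w) over all strict Dyck paths w of length 2n equals 4^{n−1}. -/
import Mathlib


open Finset

/-- Height after `i` steps of the walk `s`, starting at height `a`. -/
def height {n : ℕ} (a : ℤ) (s : Fin n → ℤ) (i : ℕ) : ℤ :=
  a + ∑ j ∈ Finset.univ.filter (fun j : Fin n => (j : ℕ) < i), s j

/-- The area under a path: the sum of its intermediate heights h_1 + ⋯ + h_{n−1}. -/
def area {n : ℕ} (s : Fin n → ℤ) : ℤ :=
  ∑ i ∈ Finset.Ico 1 n, height 0 s i

open scoped Classical in
/-- Dyck paths of length `n`. -/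
noncomputable def dyckPaths (n : ℕ) : Finset (Fin n → ℤ) :=
  (Fintype.piFinset fun _ => ({1, -1} : Finset ℤ)).filter
    (fun s => (∀ i ∈ Finset.Icc 1 n, 0 ≤ height 0 s i) ∧ height 0 s n = 0)

open scoped Classical in
/-- Strict Dyck paths of length `n`: Dyck paths with h_i > 0 for all 0 < i < n. -/
noncomputable def strictDyckPaths (n : ℕ) : Finset (Fin n → ℤ) :=
  (dyckPaths n).filter (fun s => ∀ i ∈ Finset.Ioo 0 n, 0 < height 0 s i)

section AuxSRW

open List DyckStep

open List DyckStep

/-- interpret a Dyck step as ±1 -/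
def stepInt : DyckStep → ℤ
  | U => 1
  | D => -1

/-- height of a step list after i steps -/
def hgt (l : List DyckStep) (i : ℕ) : ℤ :=
  ((l.take i).count U : ℤ) - ((l.take i).count D : ℤ)

/-- area of a Dyck word -/
def areaD (p : DyckWord) : ℤ := ∑ i ∈ Finset.range p.toList.length, hgt p.toList i

@[simp] lemma hgt_zero (l : List DyckStep) : hgt l 0 = 0 := by simp [hgt]

@[simp] lemma hgt_nil (i : ℕ) : hgt [] i = 0 := by simp [hgt]

lemma hgt_append (l₁ l₂ : List DyckStep) (i : ℕ) :
    hgt (l₁ ++ l₂) i = hgt l₁ i + hgt l₂ (i - l₁.length) := by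
  rcases le_or_gt l₁.length i with hle | hlt
  · have h1 : l₁.take i = l₁ := List.take_of_length_le hle
    simp only [hgt, List.take_append, h1, List.count_append]
    push_cast
    ring
  · have h2 : i - l₁.length = 0 := by omega
    simp [hgt, List.take_append, h2]

lemma hgt_of_length_le (p : DyckWord) {i : ℕ} (h : p.toList.length ≤ i) :
    hgt p.toList i = 0 := by
  rw [hgt, List.take_of_length_le h, p.count_U_eq_count_D]
  ring

lemma hgt_nonneg (p : DyckWord) (i : ℕ) : 0 ≤ hgt p.toList i := by
  have := p.count_D_le_count_U i
  rw [hgt]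
  omega

lemma toList_add (p q : DyckWord) : (p + q).toList = p.toList ++ q.toList := rfl

lemma toList_nest (p : DyckWord) : p.nest.toList = [U] ++ p.toList ++ [D] := rfl

lemma areaD_add (p q : DyckWord) : areaD (p + q) = areaD p + areaD q := by
  rw [areaD, areaD, areaD, toList_add, List.length_append]
  have key : ∀ i, hgt (p.toList ++ q.toList) i
      = hgt p.toList i + hgt q.toList (i - p.toList.length) :=
    fun i => hgt_append _ _ i
  rw [Finset.sum_congr rfl (fun i _ => key i), Finset.sum_add_distrib]
  congr 1
  · -- terms beyond length vanish
    rw [← Finset.sum_subset (Finset.range_subset_range.2 (Nat.le_add_right _ _))]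
    intro x _ hx
    exact hgt_of_length_le p (by simpa using hx)
  · rw [Finset.range_eq_Ico, ← Finset.sum_Ico_consecutive _ (Nat.zero_le p.toList.length)
      (Nat.le_add_right _ _)]
    have h1 : ∑ i ∈ Finset.Ico 0 p.toList.length, hgt q.toList (i - p.toList.length) = 0 := by
      apply Finset.sum_eq_zero
      intro x hx
      simp only [Finset.mem_Ico] at hx
      rw [Nat.sub_eq_zero_of_le hx.2.le, hgt_zero]
    rw [h1, zero_add, Finset.sum_Ico_eq_sum_range]
    simp

@[simp] lemma hgt_singleton_U (i : ℕ) : hgt [U] i = if i = 0 then 0 else 1 := by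
  cases i with
  | zero => simp
  | succ k => simp [hgt, List.take_of_length_le (by simp : ([U] : List DyckStep).length ≤ k + 1)]

@[simp] lemma hgt_singleton_D (i : ℕ) : hgt [D] i = if i = 0 then 0 else -1 := by
  cases i with
  | zero => simp
  | succ k => simp [hgt, List.take_of_length_le (by simp : ([D] : List DyckStep).length ≤ k + 1)]

lemma length_nest (p : DyckWord) : p.nest.toList.length = p.toList.length + 2 := by
  simp [toList_nest]

lemma hgt_nest (p : DyckWord) (i : ℕ) :
    hgt p.nest.toList i = (if i = 0 then 0 else 1) + hgt p.toList (i - 1)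
      + (if i - 1 - p.toList.length = 0 then 0 else -1) := by
  rw [toList_nest, hgt_append, hgt_append]
  have : i - ([U] ++ p.toList).length = i - 1 - p.toList.length := by
    simp only [List.length_append, List.length_singleton]
    omega
  rw [this]
  simp only [List.length_singleton, hgt_singleton_U, hgt_singleton_D]

lemma areaD_nest (p : DyckWord) : areaD p.nest = areaD p + p.toList.length + 1 := by
  rw [areaD, length_nest]
  rw [Finset.sum_congr rfl (fun i _ => hgt_nest p i)]
  rw [Finset.sum_range_succ']
  have h0 : ((if (0:ℕ) = 0 then (0:ℤ) else 1) + hgt p.toList (0 - 1)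
      + (if 0 - 1 - p.toList.length = 0 then 0 else -1)) = 0 := by simp
  rw [h0, add_zero]
  have hcong : ∀ x ∈ Finset.range (p.toList.length + 1),
      ((if x + 1 = 0 then (0:ℤ) else 1) + hgt p.toList (x + 1 - 1)
        + (if x + 1 - 1 - p.toList.length = 0 then 0 else -1)) = 1 + hgt p.toList x := by
    intro x hx
    simp only [Finset.mem_range] at hx
    have h1 : x + 1 - 1 - p.toList.length = 0 := by omega
    have h2 : x - p.toList.length = 0 := by omega
    simp [h1, h2]
  rw [Finset.sum_congr rfl hcong, Finset.sum_add_distrib, Finset.sum_const, Finset.card_range,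
    Finset.sum_range_succ, hgt_of_length_le p (le_refl _), add_zero, areaD]
  ring

open DyckWord in
lemma areaD_zero : areaD 0 = 0 := by
  simp [areaD, show (0 : DyckWord).toList = [] from rfl]

open DyckWord in
lemma semilength_eq_zero_iff {p : DyckWord} : p.semilength = 0 ↔ p = 0 := by
  constructor
  · intro h
    have h2 := p.two_mul_semilength_eq_length
    rw [h, mul_zero] at h2
    rw [← DyckWord.toList_eq_nil]
    exact (List.length_eq_zero_iff).1 h2.symm
  · rintro rfl; rfl

/-- total area of Dyck words of semilength m -/
noncomputable def TD (m : ℕ) : ℤ := ∑ p : {p : DyckWord // p.semilength = m}, areaD p.1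

open DyckWord in
lemma sum_semilength_succ {M : Type*} [AddCommMonoid M] (m : ℕ) (f : DyckWord → M) :
    ∑ p : {p : DyckWord // p.semilength = m+1}, f p.1
      = ∑ k : Fin (m+1), ∑ q : {q : DyckWord // q.semilength = (k:ℕ)},
          ∑ r : {r : DyckWord // r.semilength = m - (k:ℕ)}, f (q.1.nest + r.1) := by
  have hj : ∀ (x : Σ k : Fin (m+1),
      {q : DyckWord // q.semilength = (k:ℕ)} × {r : DyckWord // r.semilength = m - (k:ℕ)}),
      (x.2.1.1.nest + x.2.2.1).semilength = m + 1 := by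
    rintro ⟨⟨k, hk⟩, ⟨q, hq⟩, ⟨r, hr⟩⟩
    simp only [semilength_add, semilength_nest, hq, hr]
    simp only at hq hr ⊢
    omega
  let j : (Σ k : Fin (m+1),
      {q : DyckWord // q.semilength = (k:ℕ)} × {r : DyckWord // r.semilength = m - (k:ℕ)}) →
      {p : DyckWord // p.semilength = m+1} := fun x => ⟨x.2.1.1.nest + x.2.2.1, hj x⟩
  have hbij : Function.Bijective j := by
    constructor
    · rintro ⟨⟨k, hk⟩, ⟨q, hq⟩, ⟨r, hr⟩⟩ ⟨⟨k', hk'⟩, ⟨q', hq'⟩, ⟨r', hr'⟩⟩ hab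
      simp only [j, Subtype.mk.injEq] at hab
      have hqq : q = q' := by
        have h1 := congrArg DyckWord.insidePart hab
        rwa [insidePart_add nest_ne_zero, insidePart_add nest_ne_zero,
          insidePart_nest, insidePart_nest] at h1
      have hrr : r = r' := by
        have h1 := congrArg DyckWord.outsidePart hab
        rwa [outsidePart_add nest_ne_zero, outsidePart_add nest_ne_zero,
          outsidePart_nest, outsidePart_nest, zero_add, zero_add] at h1
      subst hqq; subst hrr
      have hkk : k = k' := by
        simp only at hq hq'
        omega
      subst hkk
      rfl
    · rintro ⟨p, hp⟩
      have hne : p ≠ 0 := by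
        intro h0
        rw [h0] at hp
        simp at hp
      have hin := p.semilength_insidePart_add_semilength_outsidePart_add_one hne
      refine ⟨⟨⟨p.insidePart.semilength, by omega⟩, ⟨p.insidePart, rfl⟩,
        ⟨p.outsidePart, by simp only; omega⟩⟩, ?_⟩
      exact Subtype.ext (p.nest_insidePart_add_outsidePart hne)
  rw [← Fintype.sum_bijective j hbij _ _ (fun x => rfl)]
  rw [← Finset.univ_sigma_univ, Finset.sum_sigma]
  exact Finset.sum_congr rfl fun k _ => Fintype.sum_prod_type _

lemma card_sl (k : ℕ) :
    (Finset.univ : Finset {p : DyckWord // p.semilength = k}).card = catalan k := by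
  rw [← Fintype.card, DyckWord.card_dyckWord_semilength_eq_catalan]

lemma TD_zero : TD 0 = 0 := by
  rw [TD]
  apply Finset.sum_eq_zero
  intro p _
  have : p.1 = 0 := semilength_eq_zero_iff.1 p.2
  rw [this, areaD_zero]

lemma areaD_nest_add (q r : DyckWord) :
    areaD (q.nest + r) = areaD q + (2 * q.semilength + 1) + areaD r := by
  rw [areaD_add, areaD_nest, ← q.two_mul_semilength_eq_length]
  push_cast
  ring

lemma TD_succ (m : ℕ) : TD (m+1)
    = ∑ k ∈ Finset.range (m+1),
        ((catalan (m-k) : ℤ) * (TD k + (2*k+1) * catalan k) + (catalan k : ℤ) * TD (m-k)) := by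
  rw [TD, sum_semilength_succ m areaD]
  have step : ∀ k : Fin (m+1),
      (∑ q : {q : DyckWord // q.semilength = (k:ℕ)},
        ∑ r : {r : DyckWord // r.semilength = m - (k:ℕ)}, areaD (q.1.nest + r.1))
      = (fun k : ℕ => (catalan (m-k) : ℤ) * (TD k + (2*k+1) * catalan k)
          + (catalan k : ℤ) * TD (m-k)) (k : ℕ) := by
    intro k
    have h1 : ∀ (q : {q : DyckWord // q.semilength = (k:ℕ)})
        (r : {r : DyckWord // r.semilength = m - (k:ℕ)}),
        areaD (q.1.nest + r.1) = areaD q.1 + (2*(k:ℕ)+1 : ℤ) + areaD r.1 := by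
      intro q r
      rw [areaD_nest_add, q.2]
    simp only [h1, Finset.sum_add_distrib, Finset.sum_const, Finset.card_univ,
      DyckWord.card_dyckWord_semilength_eq_catalan, nsmul_eq_mul, ← Finset.mul_sum]
    rw [show (∑ q : {q : DyckWord // q.semilength = (k:ℕ)}, areaD q.1) = TD (k:ℕ) from rfl,
      show (∑ r : {r : DyckWord // r.semilength = m - (k:ℕ)}, areaD r.1) = TD (m - (k:ℕ)) from rfl]
    push_cast
    ring
  rw [Fintype.sum_congr _ _ step]
  exact Fin.sum_univ_eq_sum_range
    (fun k : ℕ => (catalan (m-k) : ℤ) * (TD k + (2*k+1) * catalan k)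
      + (catalan k : ℤ) * TD (m-k)) (m+1)

lemma catalan_conv (m : ℕ) :
    ∑ k ∈ Finset.range (m+1), (catalan k : ℤ) * (catalan (m-k) : ℤ) = (catalan (m+1) : ℤ) := by
  rw [catalan_succ']
  rw [Finset.Nat.sum_antidiagonal_eq_sum_range_succ (fun x y => catalan x * catalan y) m]
  push_cast
  rfl

lemma S_id (m : ℕ) :
    2 * ∑ k ∈ Finset.range (m+1), (4:ℤ)^k * (catalan (m-k) : ℤ)
      = 4^(m+1) - (Nat.centralBinom (m+1) : ℤ) := by
  induction m with
  | zero => simp [Nat.centralBinom]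
  | succ m ih =>
    have peel : ∑ k ∈ Finset.range (m+2), (4:ℤ)^k * (catalan (m+1-k) : ℤ)
        = (catalan (m+1) : ℤ) + 4 * ∑ k ∈ Finset.range (m+1), (4:ℤ)^k * (catalan (m-k) : ℤ) := by
      rw [Finset.sum_range_succ' (fun k => (4:ℤ)^k * (catalan (m+1-k) : ℤ)) (m+1)]
      simp only [pow_succ, pow_zero, one_mul, Nat.sub_zero]
      rw [Finset.mul_sum]
      have : ∀ x ∈ Finset.range (m+1),
          (4:ℤ)^x * 4 * (catalan (m+1-(x+1)) : ℤ) = 4 * ((4:ℤ)^x * (catalan (m-x) : ℤ)) := by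
        intro x _
        have : m + 1 - (x+1) = m - x := by omega
        rw [this]; ring
      rw [Finset.sum_congr rfl this]
      ring
    have hu : ((m:ℤ)+2) * (Nat.centralBinom (m+2) : ℤ)
        = 2 * (2*m+3) * (Nat.centralBinom (m+1) : ℤ) := by
      have := Nat.succ_mul_centralBinom_succ (m+1)
      have h2 := congrArg (Nat.cast (R := ℤ)) this
      push_cast at h2
      push_cast
      linarith
    have hc : ((m:ℤ)+2) * (catalan (m+1) : ℤ) = (Nat.centralBinom (m+1) : ℤ) := by
      have := succ_mul_catalan_eq_centralBinom (m+1)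
      exact_mod_cast congrArg (Nat.cast (R := ℤ)) this
    have key : (Nat.centralBinom (m+2) : ℤ) = 4 * (Nat.centralBinom (m+1) : ℤ)
        - 2 * (catalan (m+1) : ℤ) := by
      have hne : ((m:ℤ)+2) ≠ 0 := by positivity
      apply mul_left_cancel₀ hne
      rw [hu]
      have : ((m:ℤ)+2) * (4 * (Nat.centralBinom (m+1) : ℤ) - 2 * (catalan (m+1) : ℤ))
          = 4 * (((m:ℤ)+2) * (Nat.centralBinom (m+1) : ℤ))
            - 2 * (((m:ℤ)+2) * (catalan (m+1) : ℤ)) := by ring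
      rw [this, hc]
      ring
    rw [peel, key]
    have hp : (4:ℤ)^(m+1+1) = 4*4^(m+1) := by ring
    linarith [ih]

lemma sym_conv (m : ℕ) :
    ∑ k ∈ Finset.range (m+1), (2*((m-k : ℕ):ℤ)+1) * ((catalan k : ℤ) * (catalan (m-k) : ℤ))
      = ((m:ℤ)+1) * (catalan (m+1) : ℤ) := by
  have hrefl := Finset.sum_range_reflect
    (fun k => (2*(k:ℤ)+1) * ((catalan k : ℤ) * (catalan (m-k) : ℤ))) (m+1)
  simp only [Nat.add_sub_cancel] at hrefl
  have hcongr : ∀ k ∈ Finset.range (m+1),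
      (2*((m-k : ℕ):ℤ)+1) * ((catalan (m-k) : ℤ) * (catalan (m-(m-k)) : ℤ))
        = (2*((m-k : ℕ):ℤ)+1) * ((catalan k : ℤ) * (catalan (m-k) : ℤ)) := by
    intro k hk
    simp only [Finset.mem_range] at hk
    rw [Nat.sub_sub_self (by omega : k ≤ m)]
    ring
  rw [Finset.sum_congr rfl hcongr] at hrefl
  -- hrefl : ∑ (2*(m-k)+1) * (C k * C (m-k)) = ∑ (2*k+1) * (C k * C (m-k))
  have hsum : (∑ k ∈ Finset.range (m+1), (2*((m-k : ℕ):ℤ)+1) * ((catalan k : ℤ) * (catalan (m-k) : ℤ)))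
      + (∑ k ∈ Finset.range (m+1), (2*(k:ℤ)+1) * ((catalan k : ℤ) * (catalan (m-k) : ℤ)))
      = (2*(m:ℤ)+2) * (catalan (m+1) : ℤ) := by
    rw [← Finset.sum_add_distrib, ← catalan_conv m, Finset.mul_sum]
    apply Finset.sum_congr rfl
    intro k hk
    simp only [Finset.mem_range] at hk
    have : ((m-k : ℕ):ℤ) = (m:ℤ) - (k:ℤ) := by
      rw [Nat.cast_sub (by omega : k ≤ m)]
    rw [this]
    ring
  have h2 : (2:ℤ) * ∑ k ∈ Finset.range (m+1), (2*((m-k : ℕ):ℤ)+1) * ((catalan k : ℤ) * (catalan (m-k) : ℤ))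
      = 2 * (((m:ℤ)+1) * (catalan (m+1) : ℤ)) := by
    rw [two_mul]
    nth_rewrite 2 [hrefl]
    rw [hsum]
    ring
  exact mul_left_cancel₀ two_ne_zero h2

lemma TD_closed : ∀ m : ℕ, TD m = 4^m - (2*(m:ℤ)+1) * (catalan m : ℤ) := by
  intro m
  induction m using Nat.strong_induction_on with
  | _ m ih =>
    match m with
    | 0 => simp [TD_zero]
    | (m+1) =>
      rw [TD_succ]
      have hcongr : ∀ k ∈ Finset.range (m+1),
          ((catalan (m-k) : ℤ) * (TD k + (2*k+1) * catalan k) + (catalan k : ℤ) * TD (m-k))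
          = (4:ℤ)^k * (catalan (m-k) : ℤ) + (4:ℤ)^(m-k) * (catalan k : ℤ)
            - (2*((m-k:ℕ):ℤ)+1) * ((catalan k : ℤ) * (catalan (m-k) : ℤ)) := by
        intro k hk
        simp only [Finset.mem_range] at hk
        rw [ih k (by omega), ih (m-k) (by omega)]
        ring
      rw [Finset.sum_congr rfl hcongr]
      simp only [sub_eq_add_neg, Finset.sum_add_distrib, Finset.sum_neg_distrib]
      rw [sym_conv]
      have hrefl := Finset.sum_range_reflect (fun k => (4:ℤ)^k * (catalan (m-k) : ℤ)) (m+1)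
      simp only [Nat.add_sub_cancel] at hrefl
      have hcongr2 : ∀ k ∈ Finset.range (m+1),
          (4:ℤ)^(m-k) * (catalan (m-(m-k)) : ℤ) = (4:ℤ)^(m-k) * (catalan k : ℤ) := by
        intro k hk
        simp only [Finset.mem_range] at hk
        rw [Nat.sub_sub_self (by omega : k ≤ m)]
      rw [Finset.sum_congr rfl hcongr2] at hrefl
      -- hrefl : ∑ 4^(m-k) * C k = ∑ 4^k * C (m-k)
      rw [hrefl]
      have hS := S_id m
      have hc : ((m:ℤ)+2) * (catalan (m+1) : ℤ) = (Nat.centralBinom (m+1) : ℤ) := by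
        have := succ_mul_catalan_eq_centralBinom (m+1)
        have h2 := congrArg (Nat.cast (R := ℤ)) this
        push_cast at h2
        linarith
      push_cast
      linarith


def toStep (x : ℤ) : DyckStep := if x = 1 then U else D

lemma stepInt_toStep {x : ℤ} (h : x = 1 ∨ x = -1) : stepInt (toStep x) = x := by
  rcases h with h | h <;> simp [h, toStep, stepInt]

lemma stepInt_injective : Function.Injective stepInt := by
  intro a b hab
  cases a <;> cases b <;> simp [stepInt] at hab ⊢

lemma sum_map_stepInt (m : List DyckStep) :
    (m.map stepInt).sum = (m.count U : ℤ) - (m.count D : ℤ) := by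
  induction m with
  | nil => simp
  | cons a t ih =>
    cases a <;> simp [stepInt, ih, List.count_cons] <;> push_cast <;> ring

lemma count_U_add_count_D (m : List DyckStep) : m.count U + m.count D = m.length := by
  induction m with
  | nil => simp
  | cons a t ih => cases a <;> simp [List.count_cons] <;> omega

lemma hgt_eq_sum (l : List DyckStep) (i : ℕ) :
    hgt l i = ((l.map stepInt).take i).sum := by
  rw [← List.map_take, sum_map_stepInt, hgt]

lemma height_zero {n : ℕ} (s : Fin n → ℤ) : height 0 s 0 = 0 := by
  simp [height]

lemma height_succ {n : ℕ} (s : Fin n → ℤ) (i : ℕ) :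
    height 0 s (i + 1) = height 0 s i + (if h : i < n then s ⟨i, h⟩ else 0) := by
  rw [height, height]
  by_cases h : i < n
  · have hset : Finset.univ.filter (fun j : Fin n => (j : ℕ) < i + 1)
        = insert ⟨i, h⟩ (Finset.univ.filter (fun j : Fin n => (j : ℕ) < i)) := by
      ext j
      simp only [Finset.mem_filter, Finset.mem_insert, Finset.mem_univ, true_and]
      constructor
      · intro hj
        rcases Nat.lt_succ_iff_lt_or_eq.1 hj with h1 | h1
        · exact Or.inr h1
        · exact Or.inl (Fin.ext h1)
      · rintro (rfl | hj)
        · simp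
        · omega
    rw [hset, Finset.sum_insert (by simp)]
    simp [h]
    ring
  · have hset : Finset.univ.filter (fun j : Fin n => (j : ℕ) < i + 1)
        = Finset.univ.filter (fun j : Fin n => (j : ℕ) < i) := by
      ext j
      simp only [Finset.mem_filter, Finset.mem_univ, true_and]
      have := j.2
      omega
    rw [hset]
    simp [h]

lemma height_of_le {n : ℕ} (s : Fin n → ℤ) {i : ℕ} (h : n ≤ i) :
    height 0 s i = height 0 s n := by
  rw [height, height]
  have hset : Finset.univ.filter (fun j : Fin n => (j : ℕ) < i)
      = Finset.univ.filter (fun j : Fin n => (j : ℕ) < n) := by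
    ext j
    simp only [Finset.mem_filter, Finset.mem_univ, true_and]
    have := j.2
    omega
  rw [hset]

lemma height_eq_sum_take {n : ℕ} (s : Fin n → ℤ) (i : ℕ) :
    height 0 s i = ((List.ofFn s).take i).sum := by
  induction i with
  | zero => simp [height]
  | succ i ih =>
    rw [height_succ, ih]
    by_cases h : i < n
    · rw [List.sum_take_succ _ _ (by simpa using h)]
      simp [h]
    · have h1 : (List.ofFn s).length ≤ i := by simpa using Nat.le_of_not_lt h
      rw [List.take_of_length_le h1, List.take_of_length_le (by omega)]
      simp [h]

/-- the walk associated to a list of steps -/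
def wfn (N : ℕ) (l : List DyckStep) : Fin N → ℤ := fun i => stepInt (l.getD i U)

lemma map_stepInt_wfn {N : ℕ} {l : List DyckStep} (h : l.length = N) :
    List.ofFn (wfn N l) = l.map stepInt := by
  apply List.ext_getElem
  · simp [h]
  · intro i h1 h2
    simp only [List.getElem_ofFn, wfn, List.getElem_map]
    rw [List.getD_eq_getElem l U (by simp only [List.length_ofFn] at h1; omega)]

lemma height_wfn {N : ℕ} {l : List DyckStep} (h : l.length = N) (i : ℕ) :
    height 0 (wfn N l) i = hgt l i := by
  rw [height_eq_sum_take, map_stepInt_wfn h, hgt_eq_sum]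

lemma mem_strictDyckPaths {N : ℕ} {w : Fin N → ℤ} :
    w ∈ strictDyckPaths N ↔
      ((∀ i : Fin N, w i ∈ ({1, -1} : Finset ℤ))
        ∧ (∀ i ∈ Finset.Icc 1 N, 0 ≤ height 0 w i) ∧ height 0 w N = 0)
      ∧ ∀ i ∈ Finset.Ioo 0 N, 0 < height 0 w i := by
  delta strictDyckPaths dyckPaths
  simp only [Finset.mem_filter, Fintype.mem_piFinset]



set_option maxHeartbeats 4000000 in
lemma wfn_surj (n : ℕ) (hn : 1 ≤ n) (w : Fin (2*n) → ℤ) (hw : w ∈ strictDyckPaths (2*n)) :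
    ∃ q : DyckWord, q.semilength = n - 1 ∧ wfn (2*n) q.nest.toList = w := by
  rw [mem_strictDyckPaths] at hw
  obtain ⟨⟨hpi, hnn, hend⟩, hstrict⟩ := hw
  have hv : ∀ i : Fin (2*n), w i = 1 ∨ w i = -1 := by
    intro i
    have := hpi i
    simp only [Finset.mem_insert, Finset.mem_singleton] at this
    exact this
  have h2n : 2 ≤ 2 * n := by omega
  have hh1 : height 0 w 1 = w ⟨0, by omega⟩ := by
    have h := height_succ w 0
    rw [height_zero, dif_pos (by omega : 0 < 2*n)] at h
    simpa using h
  have hw0 : w ⟨0, by omega⟩ = 1 := by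
    have h2 := hstrict 1 (by rw [Finset.mem_Ioo]; omega)
    rw [hh1] at h2
    rcases hv ⟨0, by omega⟩ with h | h
    · exact h
    · rw [h] at h2; norm_num at h2
  have hlaststep : height 0 w (2*n) = height 0 w (2*n-1) + w ⟨2*n-1, by omega⟩ := by
    have hs := height_succ w (2*n-1)
    rw [show 2*n - 1 + 1 = 2*n by omega, dif_pos (by omega : 2*n-1 < 2*n)] at hs
    exact hs
  have hpos1 := hstrict (2*n-1) (by rw [Finset.mem_Ioo]; omega)
  have hlast1 : height 0 w (2*n-1) = 1 := by
    rcases hv ⟨2*n-1, by omega⟩ with h | h <;> rw [h] at hlaststep <;> omega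
  have hlastw : w ⟨2*n-1, by omega⟩ = -1 := by
    omega
  -- the shifted walk
  obtain ⟨w', hw'⟩ : ∃ w' : Fin (2*n-2) → ℤ,
      ∀ i : Fin (2*n-2), w' i = w ⟨(i:ℕ)+1, by have h := i.2; omega⟩ :=
    ⟨fun i => w ⟨(i:ℕ)+1, by have h := i.2; omega⟩, fun i => rfl⟩
  have hv' : ∀ i : Fin (2*n-2), w' i = 1 ∨ w' i = -1 := by
    intro i
    rw [hw']
    exact hv _
  have hshift : ∀ i : ℕ, i ≤ 2*n-2 → height 0 w' i = height 0 w (i+1) - 1 := by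
    intro i hi
    induction i with
    | zero => rw [height_zero, hh1, hw0]; ring
    | succ i ih =>
      rw [height_succ w' i, height_succ w (i+1), ih (by omega),
        dif_pos (by omega : i < 2*n-2), dif_pos (by omega : i+1 < 2*n)]
      rw [hw']
      have : ((⟨i, by omega⟩ : Fin (2*n-2)) : ℕ) + 1 = i + 1 := rfl
      rw [show w ⟨((⟨i, by omega⟩ : Fin (2*n-2)) : ℕ) + 1, by omega⟩
          = w ⟨i+1, by omega⟩ from rfl]
      ring
  have hh' : ∀ i, 0 ≤ height 0 w' i := by
    intro i
    rcases le_or_gt i (2*n-2) with h | h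
    · rw [hshift i h]
      have := hstrict (i+1) (by rw [Finset.mem_Ioo]; omega)
      omega
    · rw [height_of_le w' (by omega : 2*n-2 ≤ i), hshift (2*n-2) le_rfl]
      have := hstrict (2*n-2+1) (by rw [Finset.mem_Ioo]; omega)
      omega
  have hbal : height 0 w' (2*n-2) = 0 := by
    rw [hshift (2*n-2) le_rfl, show 2*n-2+1 = 2*n-1 by omega, hlast1]
    ring
  -- build the Dyck word
  obtain ⟨m, hclen, hmget⟩ : ∃ m : List DyckStep, m.length = 2*n-2 ∧
      ∀ (j : ℕ) (h : j < 2*n-2), m.getD j U = toStep (w' ⟨j, h⟩) := by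
    refine ⟨List.ofFn (fun i : Fin (2*n-2) => toStep (w' i)), by simp, ?_⟩
    intro j h
    rw [List.getD_eq_getElem _ _ (by simp [List.length_ofFn]; omega), List.getElem_ofFn]
  have hmmap : m.map stepInt = List.ofFn w' := by
    apply List.ext_getElem (by simp [hclen])
    intro i h1 h2
    rw [List.getElem_map, List.getElem_ofFn]
    rw [List.length_map, hclen] at h1
    rw [← List.getD_eq_getElem m U (by omega : i < m.length), hmget i h1,
      stepInt_toStep (hv' _)]
  have hhg : ∀ i, hgt m i = height 0 w' i := by
    intro i
    rw [hgt_eq_sum, hmmap, ← height_eq_sum_take]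
  have hcount : ∀ i, (m.take i).count D ≤ (m.take i).count U := by
    intro i
    have h0 := hh' i
    rw [← hhg, hgt] at h0
    omega
  have hbalc : m.count U = m.count D := by
    have h0 := hbal
    rw [← hhg, hgt, List.take_of_length_le (le_of_eq hclen)] at h0
    omega
  refine ⟨⟨m, hbalc, hcount⟩, ?_, ?_⟩
  · -- semilength
    have hcc := count_U_add_count_D m
    rw [hclen] at hcc
    show m.count U = n - 1
    omega
  · -- the walk of the nest equals w
    funext i
    show stepInt ((([U] ++ m) ++ [D]).getD (i:ℕ) U) = w i
    have hi2 := i.2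
    have hUm : ([U] ++ m : List DyckStep).length = 2*n-1 := by
      simp [hclen]; omega
    rcases Nat.eq_zero_or_pos (i:ℕ) with hj0 | hj0
    · rw [List.getD_append _ _ _ _ (by omega), hj0,
        List.getD_append _ _ _ _ (by simp)]
      rw [show ([U] : List DyckStep).getD 0 U = U from rfl,
        show stepInt U = 1 from rfl]
      have : i = ⟨0, by omega⟩ := Fin.ext hj0
      rw [this, hw0]
    · rcases lt_or_ge (i:ℕ) (2*n-1) with hjm | hjm
      · rw [List.getD_append _ _ _ _ (by omega),
          List.getD_append_right _ _ _ _ (by simp; omega : ([U] : List DyckStep).length ≤ (i:ℕ))]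
        rw [show ([U] : List DyckStep).length = 1 from rfl]
        rw [hmget ((i:ℕ)-1) (by omega), stepInt_toStep (hv' _), hw']
        have : (⟨((⟨(i:ℕ)-1, by omega⟩ : Fin (2*n-2)) : ℕ) + 1, by simp; omega⟩ : Fin (2*n)) = i := by
          apply Fin.ext
          simp
          omega
        rw [this]
      · have hj : (i:ℕ) = 2*n-1 := by omega
        rw [List.getD_append_right _ _ _ _ (by omega : ([U] ++ m : List DyckStep).length ≤ (i:ℕ))]
        rw [hUm, hj]
        rw [show (2*n-1) - (2*n-1) = 0 by omega]
        rw [show ([D] : List DyckStep).getD 0 U = D from rfl,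
          show stepInt D = -1 from rfl]
        have : i = ⟨2*n-1, by omega⟩ := Fin.ext hj
        rw [this, hlastw]

lemma hlen_nest {n : ℕ} (hn : 1 ≤ n) (q : DyckWord) (hq : q.semilength = n - 1) :
    q.nest.toList.length = 2 * n := by
  rw [← DyckWord.two_mul_semilength_eq_length, DyckWord.semilength_nest, hq]
  omega

lemma wfn_mem {n : ℕ} (hn : 1 ≤ n) (q : DyckWord) (hq : q.semilength = n - 1) :
    wfn (2*n) q.nest.toList ∈ strictDyckPaths (2*n) := by
  have hlen := hlen_nest hn q hq
  have hh : ∀ i, height 0 (wfn (2*n) q.nest.toList) i = hgt q.nest.toList i :=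
    height_wfn hlen
  rw [mem_strictDyckPaths]
  refine ⟨⟨?_, ?_, ?_⟩, ?_⟩
  · intro i
    show stepInt (q.nest.toList.getD (i:ℕ) U) ∈ ({1, -1} : Finset ℤ)
    rcases (q.nest.toList.getD (i:ℕ) U).dichotomy with hst | hst <;>
      rw [hst] <;> simp [stepInt]
  · intro i _
    rw [hh]
    exact hgt_nonneg _ i
  · rw [hh, ← hlen]
    exact hgt_of_length_le _ le_rfl
  · intro i hi
    rw [Finset.mem_Ioo] at hi
    rw [hh]
    have hnested := (DyckWord.IsNested.nest (p := q)).2 (i := i) hi.1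
      (by rw [hlen]; exact hi.2)
    rw [hgt]
    omega

lemma area_wfn {n : ℕ} (hn : 1 ≤ n) (q : DyckWord) (hq : q.semilength = n - 1) :
    area (wfn (2*n) q.nest.toList) = areaD q.nest := by
  have hlen := hlen_nest hn q hq
  rw [area]
  rw [Finset.sum_congr rfl (fun i _ => height_wfn hlen i)]
  rw [areaD, hlen, Finset.range_eq_Ico,
    Finset.sum_eq_sum_Ico_succ_bot (by omega : 0 < 2*n), hgt_zero, zero_add]

lemma wfn_inj {n : ℕ} (hn : 1 ≤ n) (q1 q2 : DyckWord) (h1 : q1.semilength = n - 1)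
    (h2 : q2.semilength = n - 1)
    (heq : wfn (2*n) q1.nest.toList = wfn (2*n) q2.nest.toList) : q1 = q2 := by
  have htl : q1.nest.toList = q2.nest.toList := by
    apply List.ext_getElem (by rw [hlen_nest hn q1 h1, hlen_nest hn q2 h2])
    intro i ha hb
    have h3 := congrFun heq ⟨i, by rw [← hlen_nest hn q1 h1]; exact ha⟩
    simp only [wfn] at h3
    rw [List.getD_eq_getElem _ _ ha, List.getD_eq_getElem _ _ hb] at h3
    exact stepInt_injective h3
  have hne : q1.nest = q2.nest := DyckWord.ext htl
  have h4 := congrArg DyckWord.insidePart hne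
  rwa [DyckWord.insidePart_nest, DyckWord.insidePart_nest] at h4

/-- Shapiro–Rogers–Woan: for n ≥ 1, the sum of the areas of the
strict Dyck paths of length 2n equals 4^{n−1}. -/
theorem stmt16 (n : ℕ) (hn : 1 ≤ n) :
    ∑ w ∈ strictDyckPaths (2 * n), area w = 4 ^ (n - 1) := by
  classical
  have key : ∑ q : {q : DyckWord // q.semilength = n - 1}, areaD q.1.nest
      = ∑ w ∈ strictDyckPaths (2 * n), area w := by
    apply Finset.sum_bij (i := fun (q : {q : DyckWord // q.semilength = n - 1}) _ =>
      wfn (2*n) q.1.nest.toList)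
    · intro q _
      exact wfn_mem hn q.1 q.2
    · intro q1 _ q2 _ heq
      exact Subtype.ext (wfn_inj hn q1.1 q2.1 q1.2 q2.2 heq)
    · intro w hw
      obtain ⟨q, hq, hqw⟩ := wfn_surj n hn w hw
      exact ⟨⟨q, hq⟩, Finset.mem_univ _, hqw⟩
    · intro q _
      exact (area_wfn hn q.1 q.2).symm
  rw [← key]
  have hc : ∀ q : {q : DyckWord // q.semilength = n - 1},
      areaD q.1.nest = areaD q.1 + (2*((n-1:ℕ):ℤ)+1) := by
    intro q
    rw [areaD_nest, ← q.1.two_mul_semilength_eq_length, q.2]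
    push_cast
    ring
  rw [Fintype.sum_congr _ _ hc, Finset.sum_add_distrib, Finset.sum_const, Finset.card_univ,
    DyckWord.card_dyckWord_semilength_eq_catalan, nsmul_eq_mul]
  rw [show (∑ q : {q : DyckWord // q.semilength = n - 1}, areaD q.1) = TD (n-1) from rfl,
    TD_closed]
  ring
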